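/- For Hoeffding's exponent φ_H(z, μ, θ) with 0 < z < μ < 1, the partial derivative with respect to μ is ≥ 0, and the partial derivative with respect to θ is ≤ 0 for θ ∈ (0, 1). -/

import Mathlib

noncomputable def phiH (z ν θ : ℝ) : ℝ :=
  (1 - z * ν / (ν ^ 2 + θ)) * Real.log ((θ + ν * (ν - z)) / θ) +
    (z * ν / (ν ^ 2 + θ)) * Real.log (z / ν)

/-- For `0 < z < μ < 1` and `θ ∈ (0,1)`: `∂φ_H/∂μ ≥ 0` and `∂φ_H/∂θ ≤ 0`. -/
theorem phiH_deriv_signs (z μ θ : ℝ) (hz : 0 < z) (hzμ : z < μ) (hμ : μ < 1)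
    (hθ0 : 0 < θ) (hθ1 : θ < 1) :
    0 ≤ deriv (fun ν : ℝ => phiH z ν θ) μ ∧ deriv (fun t : ℝ => phiH z μ t) θ ≤ 0 := by
  have hμ0 : 0 < μ := hz.trans hzμ
  have hD : (0:ℝ) < μ ^ 2 + θ := by positivity
  have hN : (0:ℝ) < θ + μ * (μ - z) := by nlinarith
  -- log facts
  have hAB : Real.log ((θ + μ * (μ - z)) / θ) - Real.log (z / μ)
      = Real.log ((θ + μ * (μ - z)) * μ / (θ * z)) := by
    rw [Real.log_div hN.ne' hθ0.ne', Real.log_div hz.ne' hμ0.ne',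
      Real.log_div (by positivity) (by positivity),
      Real.log_mul hN.ne' hμ0.ne', Real.log_mul hθ0.ne' hz.ne']
    ring
  have hL0 : 0 ≤ Real.log ((θ + μ * (μ - z)) / θ) - Real.log (z / μ) := by
    rw [hAB]
    apply Real.log_nonneg
    rw [le_div_iff₀ (by positivity)]
    nlinarith [mul_pos (sub_pos.mpr hzμ) hD]
  have hkey : z * θ * (Real.log ((θ + μ * (μ - z)) / θ) - Real.log (z / μ))
      ≤ (μ - z) * (μ ^ 2 + θ) := by
    rw [hAB]
    have h1 : Real.log ((θ + μ * (μ - z)) * μ / (θ * z))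
        ≤ (θ + μ * (μ - z)) * μ / (θ * z) - 1 :=
      Real.log_le_sub_one_of_pos (by positivity)
    have h2 : z * θ * ((θ + μ * (μ - z)) * μ / (θ * z) - 1) = (μ - z) * (μ ^ 2 + θ) := by
      field_simp
      ring
    nlinarith [mul_le_mul_of_nonneg_left h1 (by positivity : (0:ℝ) ≤ z * θ)]
  -- derivative in ν
  have hlog1 : HasDerivAt (fun ν : ℝ => Real.log ((θ + ν * (ν - z)) / θ))
      ((2 * μ - z) / (θ + μ * (μ - z))) μ := by
    have hin : HasDerivAt (fun ν : ℝ => (θ + ν * (ν - z)) / θ) ((2 * μ - z) / θ) μ := by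
      have h0 : HasDerivAt (fun ν : ℝ => θ + ν * (ν - z)) (2 * μ - z) μ := by
        have := ((hasDerivAt_id μ).mul ((hasDerivAt_id μ).sub_const z)).const_add θ
        convert this using 1 <;> try rfl
        simp [id]
        ring
      exact h0.div_const θ
    have := hin.log (by positivity)
    convert this using 1
    field_simp
  have hlog2 : HasDerivAt (fun ν : ℝ => Real.log (z / ν)) (-(1 / μ)) μ := by
    have hin : HasDerivAt (fun ν : ℝ => z / ν) (-(z / μ ^ 2)) μ := by
      have := (hasDerivAt_const μ z).div (hasDerivAt_id μ) hμ0.ne'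
      convert this using 1 <;> try rfl
      simp only [id]
      field_simp
      ring
    have := hin.log (by positivity)
    convert this using 1
    rw [eq_div_iff (by positivity)]
    field_simp
  have hf1 : HasDerivAt (fun ν : ℝ => z * ν / (ν ^ 2 + θ))
      (z * (θ - μ ^ 2) / (μ ^ 2 + θ) ^ 2) μ := by
    have := ((hasDerivAt_id μ).const_mul z).div ((hasDerivAt_pow 2 μ).add_const θ) hD.ne'
    convert this using 1 <;> try rfl
    simp only [id]
    field_simp
    ring
  have H1 : HasDerivAt (fun ν : ℝ => phiH z ν θ)
      (z * (θ - μ ^ 2) / (μ ^ 2 + θ) ^ 2 *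
        (Real.log (z / μ) - Real.log ((θ + μ * (μ - z)) / θ)) + 2 * (μ - z) / (μ ^ 2 + θ)) μ := by
    unfold phiH
    have H := ((hf1.const_sub 1).mul hlog1).add (hf1.mul hlog2)
    convert H using 1 <;> try rfl
    field_simp
    ring
  -- derivative in θ
  have hlog1t : HasDerivAt (fun t : ℝ => Real.log ((t + μ * (μ - z)) / t))
      (1 / (θ + μ * (μ - z)) - 1 / θ) θ := by
    have hin : HasDerivAt (fun t : ℝ => (t + μ * (μ - z)) / t)
        ((1 * θ - (θ + μ * (μ - z)) * 1) / θ ^ 2) θ :=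
      ((hasDerivAt_id θ).add_const (μ * (μ - z))).div (hasDerivAt_id θ) hθ0.ne'
    have := hin.log (by positivity)
    convert this using 1
    field_simp
  have hf2 : HasDerivAt (fun t : ℝ => z * μ / (μ ^ 2 + t))
      (-(z * μ / (μ ^ 2 + θ) ^ 2)) θ := by
    have := (hasDerivAt_const θ (z * μ)).div ((hasDerivAt_id θ).const_add (μ ^ 2)) hD.ne'
    convert this using 1 <;> try rfl
    simp only [id]
    field_simp
    ring
  have H2 : HasDerivAt (fun t : ℝ => phiH z μ t)
      (z * μ / (μ ^ 2 + θ) ^ 2 *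
        (Real.log ((θ + μ * (μ - z)) / θ) - Real.log (z / μ))
        - μ * (μ - z) / ((μ ^ 2 + θ) * θ)) θ := by
    unfold phiH
    have H := ((hf2.const_sub 1).mul hlog1t).add
      (hf2.mul (hasDerivAt_const θ (Real.log (z / μ))))
    convert H using 1 <;> try rfl
    field_simp
    ring
  constructor
  · rw [H1.deriv]
    have heq : z * (θ - μ ^ 2) / (μ ^ 2 + θ) ^ 2 *
        (Real.log (z / μ) - Real.log ((θ + μ * (μ - z)) / θ)) + 2 * (μ - z) / (μ ^ 2 + θ)
        = (2 * (μ - z) * (μ ^ 2 + θ) - z * (θ - μ ^ 2) *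
            (Real.log ((θ + μ * (μ - z)) / θ) - Real.log (z / μ))) / (μ ^ 2 + θ) ^ 2 := by
      field_simp
      ring
    rw [heq]
    apply div_nonneg _ (by positivity)
    nlinarith [hkey, hL0, mul_nonneg (mul_nonneg hz.le (sq_nonneg μ)) hL0,
      mul_pos (sub_pos.mpr hzμ) hD]
  · rw [H2.deriv]
    have heq : z * μ / (μ ^ 2 + θ) ^ 2 *
        (Real.log ((θ + μ * (μ - z)) / θ) - Real.log (z / μ))
        - μ * (μ - z) / ((μ ^ 2 + θ) * θ)
        = (z * μ * θ * (Real.log ((θ + μ * (μ - z)) / θ) - Real.log (z / μ))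
            - μ * (μ - z) * (μ ^ 2 + θ)) / ((μ ^ 2 + θ) ^ 2 * θ) := by
      field_simp
    rw [heq]
    apply div_nonpos_of_nonpos_of_nonneg _ (by positivity)
    nlinarith [mul_le_mul_of_nonneg_left hkey hμ0.le]
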